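/- Let G be a finite group, M a subgroup of G with |G : M| = p for a prime p, such that the Fitting subgroup F(G) is not contained in M and M is supersolvable. Then G is supersolvable. -/

import Mathlib

/-- A group is supersolvable if it has a normal series (all terms normal in the whole
group) with cyclic factors. -/
def IsSupersolvable (G : Type*) [Group G] : Prop :=
  ∃ (n : ℕ) (s : Fin (n + 1) → Subgroup G),
    s 0 = ⊥ ∧ s (Fin.last n) = ⊤ ∧ (∀ i, (s i).Normal) ∧
    ∀ i : Fin n, ∃ x : G, s i.succ = s i.castSucc ⊔ Subgroup.zpowers x

namespace SupersolvableAux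

open Subgroup Pointwise
open scoped commutatorElement

variable {G : Type*} [Group G]

/-- A partial supersolvable series reaching `A`. -/
def SSTo (A : Subgroup G) : Prop :=
  ∃ (n : ℕ) (s : Fin (n + 1) → Subgroup G),
    s 0 = ⊥ ∧ s (Fin.last n) = A ∧ (∀ i, (s i).Normal) ∧
    ∀ i : Fin n, ∃ x : G, s i.succ = s i.castSucc ⊔ Subgroup.zpowers x

lemma bot_normal' : (⊥ : Subgroup G).Normal :=
  ⟨fun x hx g => by rw [Subgroup.mem_bot] at *; simp [hx]⟩

lemma ssto_bot : SSTo (⊥ : Subgroup G) :=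
  ⟨0, fun _ => ⊥, rfl, rfl, fun _ => bot_normal', fun i => i.elim0⟩

lemma ssto_append {A A' : Subgroup G} (h : SSTo A) (hN : A'.Normal) (x : G)
    (hx : A' = A ⊔ Subgroup.zpowers x) : SSTo A' := by
  obtain ⟨n, s, h0, hl, hn, hs⟩ := h
  refine ⟨n + 1, Fin.snoc s A', ?_, ?_, ?_, ?_⟩
  · rw [show (0 : Fin (n + 2)) = Fin.castSucc 0 from rfl, Fin.snoc_castSucc]
    exact h0
  · simp
  · intro i
    refine Fin.lastCases ?_ (fun j => ?_) i
    · simpa using hN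
    · rw [Fin.snoc_castSucc]; exact hn j
  · intro i
    refine Fin.lastCases ?_ (fun j => ?_) i
    · refine ⟨x, ?_⟩
      rw [Fin.succ_last, Fin.snoc_last, Fin.snoc_castSucc, hl, hx]
    · obtain ⟨y, hy⟩ := hs j
      refine ⟨y, ?_⟩
      rw [Fin.succ_castSucc, Fin.snoc_castSucc, Fin.snoc_castSucc, hy]

lemma le_normalizer_of_conj {H K : Subgroup G}
    (hc : ∀ g ∈ H, ∀ h ∈ K, g * h * g⁻¹ ∈ K) : H ≤ Subgroup.normalizer (K : Set G) := by
  intro g hg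
  rw [Subgroup.mem_normalizer_iff]
  intro h
  constructor
  · exact fun hh => hc g hg h hh
  · intro hh
    have h2 := hc g⁻¹ (inv_mem hg) _ hh
    have e : g⁻¹ * (g * h * g⁻¹) * g⁻¹⁻¹ = h := by group
    rwa [e] at h2

/-- Transfer a supersolvable series of `M` to subgroups of `G`. -/
lemma exists_series (M : Subgroup G) (hM : IsSupersolvable M) :
    ∃ (n : ℕ) (t : Fin (n + 1) → Subgroup G),
      t 0 = ⊥ ∧ t (Fin.last n) = M ∧ (∀ i, t i ≤ M) ∧
      (∀ i, ∀ m ∈ M, ∀ u ∈ t i, m * u * m⁻¹ ∈ t i) ∧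
      ∀ i : Fin n, ∃ x ∈ M, t i.succ = t i.castSucc ⊔ Subgroup.zpowers x := by
  obtain ⟨n, s, h0, hl, hn, hs⟩ := hM
  refine ⟨n, fun i => (s i).map M.subtype, ?_, ?_, ?_, ?_, ?_⟩
  · show (s 0).map M.subtype = ⊥
    rw [h0]; exact Subgroup.map_bot _
  · show (s (Fin.last n)).map M.subtype = M
    rw [hl, ← MonoidHom.range_eq_map, M.range_subtype]
  · intro i g hg
    obtain ⟨v, _, rfl⟩ := hg
    exact v.2
  · intro i m hm u hu
    obtain ⟨v, hv, rfl⟩ := hu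
    exact ⟨⟨m, hm⟩ * v * ⟨m, hm⟩⁻¹, (hn i).conj_mem v hv ⟨m, hm⟩, rfl⟩
  · intro i
    obtain ⟨x, hx⟩ := hs i
    refine ⟨(x : G), x.2, ?_⟩
    show (s i.succ).map M.subtype = (s i.castSucc).map M.subtype ⊔ _
    rw [hx, Subgroup.map_sup, MonoidHom.map_zpowers]
    rfl

/-- The main chief-factor step: a `G`-chief factor `A/B` inside `F ⊓ M` is cyclic. -/
lemma chief_step {F M A B : Subgroup G} (hFn : F.Normal) (hFnil : Group.IsNilpotent F)
    (htop : F ⊔ M = ⊤) (hM : IsSupersolvable M)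
    (hA : A.Normal) (hB : B.Normal) (hAF : A ≤ F) (hAM : A ≤ M) (hBA : B < A)
    (hmax : ∀ C : Subgroup G, C.Normal → B ≤ C → C ≤ A → C = B ∨ C = A) :
    ∃ a : G, A = B ⊔ Subgroup.zpowers a := by
  haveI := hA
  haveI := hB
  haveI := hFn
  -- Step 1: F centralizes A/B, i.e. ⁅A, F⁆ ≤ B
  have hcom : ⁅A, F⁆ ≤ B := by
    set K : ℕ → Subgroup G := fun j => (fun H => ⁅H, F⁆)^[j] A with hK
    have hK0 : K 0 = A := rfl
    have hKsucc : ∀ j, K (j + 1) = ⁅K j, F⁆ := fun j => Function.iterate_succ_apply' _ _ _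
    have hKnormal : ∀ j, (K j).Normal := by
      intro j
      induction j with
      | zero => exact hA
      | succ j ih =>
        rw [hKsucc]
        exact @Subgroup.commutator_normal _ _ (K j) F ih hFn
    have hKle : ∀ j, K j ≤ Subgroup.map F.subtype ((⊤ : Subgroup F).lowerCentralSeries j) := by
      intro j
      induction j with
      | zero =>
        rw [hK0, Subgroup.lowerCentralSeries_zero, ← MonoidHom.range_eq_map, F.range_subtype]
        exact hAF
      | succ j ih =>
        rw [hKsucc]
        calc ⁅K j, F⁆ ≤ ⁅Subgroup.map F.subtype ((⊤ : Subgroup F).lowerCentralSeries j),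
              Subgroup.map F.subtype ⊤⁆ := by
              apply Subgroup.commutator_mono ih
              rw [← MonoidHom.range_eq_map, F.range_subtype]
          _ = Subgroup.map F.subtype ⁅(⊤ : Subgroup F).lowerCentralSeries j, (⊤ : Subgroup F)⁆ :=
              (Subgroup.map_commutator _ _ _).symm
          _ = Subgroup.map F.subtype ((⊤ : Subgroup F).lowerCentralSeries (j + 1)) := rfl
    obtain ⟨m, hm⟩ := Subgroup.nilpotent_iff_lowerCentralSeries.mp hFnil
    have hKm : K m ≤ ⊥ := by
      have h2 := hKle m
      rw [hm] at h2
      simpa using h2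
    have hAFA : ⁅A, F⁆ ≤ A := Subgroup.commutator_le_left A F
    haveI hAFnorm : (⁅A, F⁆).Normal := @Subgroup.commutator_normal _ _ A F hA hFn
    haveI hsupnorm : (⁅A, F⁆ ⊔ B).Normal := @Subgroup.sup_normal _ _ ⁅A, F⁆ B hAFnorm hB
    rcases hmax (⁅A, F⁆ ⊔ B) hsupnorm le_sup_right (sup_le hAFA hBA.le) with h | h
    · exact le_sup_left.trans h.le
    · exfalso
      have hind : ∀ j, A ≤ K j ⊔ B := by
        intro j
        induction j with
        | zero => rw [hK0]; exact le_sup_left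
        | succ j ih =>
          have hc : ⁅K j ⊔ B, F⁆ ≤ K (j + 1) ⊔ B := by
            rw [Subgroup.commutator_le]
            intro g hg f hf
            have hg' : g ∈ ((K j : Set G) * (B : Set G)) := by
              rw [← @Subgroup.normal_mul _ _ (K j) B (hKnormal j)]
              exact hg
            obtain ⟨u, hu, b, hb, rfl⟩ := hg'
            have hid : ⁅u * b, f⁆ = (u * ⁅b, f⁆ * u⁻¹) * ⁅u, f⁆ := by
              simp only [commutatorElement_def]; group
            rw [hid]
            have hbf : ⁅b, f⁆ ∈ B := by
              have he : ⁅b, f⁆ = b * (f * b⁻¹ * f⁻¹) := by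
                simp only [commutatorElement_def]; group
              rw [he]
              exact mul_mem hb (hB.conj_mem _ (inv_mem hb) f)
            refine mul_mem (Subgroup.mem_sup_right ?_) (Subgroup.mem_sup_left ?_)
            · exact hB.conj_mem _ hbf u
            · rw [hKsucc]
              exact Subgroup.commutator_mem_commutator hu hf
          have h1 : ⁅A, F⁆ ≤ K (j + 1) ⊔ B :=
            le_trans (Subgroup.commutator_mono ih le_rfl) hc
          calc A = ⁅A, F⁆ ⊔ B := h.symm
            _ ≤ (K (j + 1) ⊔ B) ⊔ B := sup_le (h1.trans le_sup_left) le_sup_right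
            _ = K (j + 1) ⊔ B := by rw [sup_assoc, sup_idem]
      have hAB : A ≤ B := by
        calc A ≤ K m ⊔ B := hind m
          _ ≤ ⊥ ⊔ B := sup_le (hKm.trans le_sup_left) le_sup_right
          _ = B := bot_sup_eq B
      exact hBA.not_ge hAB
  have hcom' : ∀ f ∈ F, ∀ α ∈ A, ⁅f, α⁆ ∈ B := by
    intro f hf α hα
    exact hcom (by rw [Subgroup.commutator_comm]; exact Subgroup.commutator_mem_commutator hf hα)
  -- Step 2: get the series of M
  obtain ⟨n, t, ht0, htl, htle, htinv, hts⟩ := exists_series M hM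
  -- Step 3: intermediate subgroups
  set C : Fin (n + 1) → Subgroup G := fun i => B ⊔ (A ⊓ t i) with hC
  have hCnorm : ∀ i, (C i).Normal := by
    intro i
    have hdecomp : ∀ h ∈ C i, ∃ b ∈ B, ∃ τ, (τ ∈ A ∧ τ ∈ t i) ∧ b * τ = h := by
      intro h hh
      have h2 : h ∈ ((B : Set G) * ((A ⊓ t i : Subgroup G) : Set G)) := by
        rw [← Subgroup.normal_mul]; exact hh
      obtain ⟨b, hb, τ, hτ, rfl⟩ := h2
      exact ⟨b, hb, τ, ⟨hτ.1, hτ.2⟩, rfl⟩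
    have hFc : ∀ f ∈ F, ∀ h ∈ C i, f * h * f⁻¹ ∈ C i := by
      intro f hf h hh
      obtain ⟨b, hb, τ, ⟨hτA, hτt⟩, rfl⟩ := hdecomp _ hh
      have he : f * (b * τ) * f⁻¹ = (f * b * f⁻¹) * (⁅f, τ⁆ * τ) := by
        simp only [commutatorElement_def]; group
      rw [he]
      refine mul_mem (Subgroup.mem_sup_left ?_)
        (mul_mem (Subgroup.mem_sup_left ?_) (Subgroup.mem_sup_right ?_))
      · exact hB.conj_mem _ hb f
      · exact hcom' f hf τ hτA
      · exact ⟨hτA, hτt⟩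
    have hMc : ∀ m ∈ M, ∀ h ∈ C i, m * h * m⁻¹ ∈ C i := by
      intro m hm h hh
      obtain ⟨b, hb, τ, ⟨hτA, hτt⟩, rfl⟩ := hdecomp _ hh
      have he : m * (b * τ) * m⁻¹ = (m * b * m⁻¹) * (m * τ * m⁻¹) := by group
      rw [he]
      exact mul_mem (Subgroup.mem_sup_left (hB.conj_mem _ hb m))
        (Subgroup.mem_sup_right ⟨hA.conj_mem _ hτA m, htinv i m hm τ hτt⟩)
    have hnt : Subgroup.normalizer (C i : Set G) = ⊤ := by
      rw [eq_top_iff, ← htop]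
      exact sup_le (le_normalizer_of_conj hFc) (le_normalizer_of_conj hMc)
    exact Subgroup.normalizer_eq_top_iff.mp hnt
  have hC0 : C 0 = B := by
    show B ⊔ (A ⊓ t 0) = B
    rw [ht0]
    simp
  have hClast : C (Fin.last n) = A := by
    show B ⊔ (A ⊓ t (Fin.last n)) = A
    rw [htl, inf_eq_left.mpr hAM, sup_eq_right.mpr hBA.le]
  have hCd : ∀ i, C i = B ∨ C i = A := fun i =>
    hmax (C i) (hCnorm i) le_sup_left (sup_le hBA.le inf_le_left)
  -- Step 4: find the jump
  have hjump : ∃ i : Fin n, C i.castSucc = B ∧ C i.succ = A := by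
    have key : ∀ j : ℕ, ∀ hj : j < n + 1, C ⟨j, hj⟩ = A →
        ∃ i : Fin n, C i.castSucc = B ∧ C i.succ = A := by
      intro j
      induction j with
      | zero =>
        intro hj hCj
        exfalso
        rw [Fin.mk_zero, hC0] at hCj
        exact hBA.ne hCj
      | succ j ih =>
        intro hj hCj
        have hjn : j < n + 1 := by omega
        rcases hCd ⟨j, hjn⟩ with h | h
        · exact ⟨⟨j, by omega⟩, h, hCj⟩
        · exact ih hjn h
    exact key n (by omega)
      (by rw [show (⟨n, by omega⟩ : Fin (n + 1)) = Fin.last n from rfl]; exact hClast)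
  obtain ⟨i, hjump0, hjump1⟩ := hjump
  obtain ⟨x, hxM, hx⟩ := hts i
  have hABt₀ : A ⊓ t i.castSucc ≤ B := by
    have h2 : A ⊓ t i.castSucc ≤ C i.castSucc := le_sup_right
    rw [hjump0] at h2
    exact h2
  have hA1 : B ⊔ (A ⊓ t i.succ) = A := hjump1
  have hconj' : ∀ g ∈ M, ∀ u ∈ t i.castSucc, g * u * g⁻¹ ∈ t i.castSucc := htinv i.castSucc
  -- normal form subgroup W
  set W : Subgroup G :=
    { carrier := {g | ∃ u ∈ t i.castSucc, ∃ k : ℤ, g = u * x ^ k}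
      one_mem' := ⟨1, one_mem _, 0, by simp⟩
      mul_mem' := by
        rintro g₁ g₂ ⟨u, hu, k, rfl⟩ ⟨v, hv, l, rfl⟩
        refine ⟨u * (x ^ k * v * (x ^ k)⁻¹),
          mul_mem hu (hconj' _ (zpow_mem hxM k) v hv), k + l, ?_⟩
        rw [zpow_add]; group
      inv_mem' := by
        rintro g ⟨u, hu, k, rfl⟩
        refine ⟨x ^ (-k) * u⁻¹ * (x ^ (-k))⁻¹,
          hconj' _ (zpow_mem hxM (-k)) _ (inv_mem hu), -k, ?_⟩
        rw [zpow_neg]; group } with hW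
  have hWt : t i.succ ≤ W := by
    rw [hx]
    refine sup_le (fun u hu => ⟨u, hu, 0, by simp⟩) ?_
    rw [Subgroup.zpowers_le]
    exact ⟨1, one_mem _, 1, by simp⟩
  -- the subgroup of exponents
  set S : AddSubgroup ℤ :=
    { carrier := {k | x ^ k ∈ A ⊔ t i.castSucc}
      zero_mem' := by
        simp only [Set.mem_setOf_eq, zpow_zero]
        exact one_mem _
      add_mem' := by
        intro k l hk hl
        simp only [Set.mem_setOf_eq] at *
        rw [zpow_add]; exact mul_mem hk hl
      neg_mem' := by
        intro k hk
        simp only [Set.mem_setOf_eq] at *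
        rw [zpow_neg]; exact inv_mem hk } with hS
  obtain ⟨d, hd⟩ := Int.subgroup_cyclic S
  have hdS : d ∈ S := by
    rw [hd]; exact AddSubgroup.subset_closure rfl
  have hxd : x ^ d ∈ ((A : Set G) * ((t i.castSucc : Subgroup G) : Set G)) := by
    rw [← Subgroup.normal_mul]; exact hdS
  obtain ⟨a, haA, u₀, hu₀, hxdeq⟩ := hxd
  -- key power computation
  have key : ∀ m : ℤ, ∃ u ∈ t i.castSucc, a ^ m = x ^ (d * m) * u := by
    have ha : a = x ^ d * u₀⁻¹ := by rw [← hxdeq]; group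
    intro m
    induction m using Int.induction_on with
    | zero => exact ⟨1, one_mem _, by simp⟩
    | succ m ih =>
      obtain ⟨u, hu, he⟩ := ih
      refine ⟨((x ^ d)⁻¹ * u * ((x ^ d)⁻¹)⁻¹) * u₀⁻¹,
        mul_mem (hconj' _ (inv_mem (zpow_mem hxM d)) u hu) (inv_mem hu₀), ?_⟩
      have h1 : a ^ ((m : ℤ) + 1) = a ^ (m : ℤ) * a := by rw [zpow_add, zpow_one]
      rw [h1, he, ha, show d * ((m : ℤ) + 1) = d * m + d by ring, zpow_add]
      group
    | pred m ih =>
      obtain ⟨u, hu, he⟩ := ih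
      refine ⟨x ^ d * (u * u₀) * (x ^ d)⁻¹,
        hconj' _ (zpow_mem hxM d) _ (mul_mem hu hu₀), ?_⟩
      have h1 : a ^ (-(m : ℤ) - 1) = a ^ (-(m : ℤ)) * a⁻¹ := by
        rw [sub_eq_add_neg, zpow_add, zpow_neg_one]
      have ha' : a⁻¹ = u₀ * (x ^ d)⁻¹ := by rw [ha]; group
      rw [h1, he, ha', show d * (-(m : ℤ) - 1) = d * (-(m : ℤ)) + (-d) by ring, zpow_add]
      group
  -- conclude
  refine ⟨a, le_antisymm ?_ (sup_le hBA.le (Subgroup.zpowers_le.mpr haA))⟩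
  intro α hα
  have hα' : α ∈ B ⊔ (A ⊓ t i.succ) := by rw [hA1]; exact hα
  have hα2 : α ∈ ((B : Set G) * ((A ⊓ t i.succ : Subgroup G) : Set G)) := by
    rw [← Subgroup.normal_mul]; exact hα'
  obtain ⟨b, hb, τ, hτ, rfl⟩ := hα2
  have hτA : τ ∈ A := hτ.1
  obtain ⟨u, hu, k, hτuk⟩ := hWt hτ.2
  have hxk : (k : ℤ) ∈ S := by
    show x ^ k ∈ A ⊔ t i.castSucc
    have he : x ^ k = u⁻¹ * τ := by rw [hτuk]; group
    rw [he]
    exact mul_mem (Subgroup.mem_sup_right (inv_mem hu)) (Subgroup.mem_sup_left hτA)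
  obtain ⟨m, hm⟩ : ∃ m : ℤ, m * d = k := by
    rw [hd] at hxk
    obtain ⟨m, hm⟩ := AddSubgroup.mem_closure_singleton.mp hxk
    exact ⟨m, by rw [← hm]; simp [zsmul_eq_mul]⟩
  obtain ⟨u₂, hu₂, hL⟩ := key m
  have hdm : d * m = k := by rw [← hm]; ring
  have hwt : τ * (a ^ m)⁻¹ ∈ t i.castSucc := by
    have he : τ * (a ^ m)⁻¹ = u * (x ^ k * u₂⁻¹ * (x ^ k)⁻¹) := by
      rw [hτuk, hL, hdm]; group
    rw [he]
    exact mul_mem hu (hconj' _ (zpow_mem hxM k) _ (inv_mem hu₂))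
  have hwA : τ * (a ^ m)⁻¹ ∈ A := mul_mem hτA (inv_mem (zpow_mem haA m))
  have hwB : τ * (a ^ m)⁻¹ ∈ B := hABt₀ ⟨hwA, hwt⟩
  have hfinal : b * τ = (b * (τ * (a ^ m)⁻¹)) * a ^ m := by group
  show b * τ ∈ B ⊔ Subgroup.zpowers a
  rw [hfinal]
  exact mul_mem (mul_mem (Subgroup.mem_sup_left hb) (Subgroup.mem_sup_left hwB))
    (Subgroup.mem_sup_right (zpow_mem (Subgroup.mem_zpowers a) m))

/-- Strong induction: every normal subgroup of `G` inside `F ⊓ M` has a partial series. -/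
lemma ssto_chain [Finite G] (F M : Subgroup G) (hFn : F.Normal) (hFnil : Group.IsNilpotent F)
    (htop : F ⊔ M = ⊤) (hM : IsSupersolvable M) :
    ∀ A : Subgroup G, A.Normal → A ≤ F → A ≤ M → SSTo A := by
  suffices H : ∀ N : ℕ, ∀ A : Subgroup G, Nat.card A ≤ N → A.Normal → A ≤ F → A ≤ M → SSTo A by
    exact fun A hA h1 h2 => H (Nat.card A) A le_rfl hA h1 h2
  intro N
  induction N with
  | zero =>
    intro A hcard _ _ _
    exfalso
    have : 0 < Nat.card A := Nat.card_pos
    omega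
  | succ N ih =>
    intro A hcard hA hAF hAM
    by_cases hbot : A = ⊥
    · subst hbot; exact ssto_bot
    · have hfin : ({B : Subgroup G | B.Normal ∧ B < A}).Finite := Set.toFinite _
      have hne : ({B : Subgroup G | B.Normal ∧ B < A}).Nonempty :=
        ⟨⊥, bot_normal', bot_lt_iff_ne_bot.mpr hbot⟩
      obtain ⟨B, hBmem, hBmax⟩ := Set.Finite.exists_maximalFor id _ hfin hne
      obtain ⟨hB, hBA⟩ := hBmem
      have hmax : ∀ C : Subgroup G, C.Normal → B ≤ C → C ≤ A → C = B ∨ C = A := by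
        intro C hC h1 h2
        by_cases hCA : C = A
        · exact Or.inr hCA
        · exact Or.inl (le_antisymm (hBmax (show C ∈ {B : Subgroup G | B.Normal ∧ B < A} from ⟨hC, lt_of_le_of_ne h2 hCA⟩) h1) h1)
      obtain ⟨a, ha⟩ := chief_step hFn hFnil htop hM hA hB hAF hAM hBA hmax
      have hBcard : Nat.card B ≤ N := by
        have h1 : (B : Set G) ⊂ (A : Set G) := SetLike.coe_ssubset_coe.mpr hBA
        have h2 := Set.ncard_lt_ncard h1 (Set.toFinite _)
        have h3 : Nat.card B < Nat.card A := by
          rw [← Nat.card_coe_set_eq, ← Nat.card_coe_set_eq] at h2; exact h2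
        omega
      exact ssto_append (ih B hBcard hB (hBA.le.trans hAF) (hBA.le.trans hAM)) hA a ha

end SupersolvableAux

open Pointwise

theorem supersolvable_of_index_p {G : Type*} [Group G] [Finite G] (p : ℕ) (hp : p.Prime)
    (M : Subgroup G) (hMi : M.index = p) (F : Subgroup G) (hFn : F.Normal)
    (hFnil : Group.IsNilpotent F)
    (hFmax : ∀ N : Subgroup G, N.Normal → Group.IsNilpotent N → N ≤ F)
    (hFM : ¬ F ≤ M) (hM : IsSupersolvable M) : IsSupersolvable G := by
  classical
  open SupersolvableAux in
  haveI := hFn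
  haveI := hFnil
  -- F ⊔ M = ⊤
  have htop : F ⊔ M = ⊤ := by
    have hdvd : (F ⊔ M).index ∣ M.index := Subgroup.index_dvd_of_le le_sup_right
    rw [hMi] at hdvd
    rcases hp.eq_one_or_self_of_dvd _ hdvd with h1 | h1
    · exact Subgroup.index_eq_one.mp h1
    · exfalso
      have hrel : M.relIndex (F ⊔ M) * (F ⊔ M).index = M.index :=
        Subgroup.relIndex_mul_index le_sup_right
      rw [h1, hMi] at hrel
      have h2 : M.relIndex (F ⊔ M) = 1 := by
        have h3 : M.relIndex (F ⊔ M) * p = 1 * p := by rw [hrel, one_mul]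
        exact Nat.eq_of_mul_eq_mul_right hp.pos h3
      exact hFM (le_sup_left.trans (Subgroup.relIndex_eq_one.mp h2))
  -- relindex of D := F ⊓ M in F is p
  have hrelD : (F ⊓ M).relIndex F = p := by
    have h1 : (F ⊓ M).relIndex M = F.index := by
      rw [Subgroup.inf_relIndex_right, ← Subgroup.relIndex_sup_right M F, sup_comm, htop,
        Subgroup.relIndex_top_right]
    have h2 : (F ⊓ M).relIndex F * F.index = (F ⊓ M).index :=
      Subgroup.relIndex_mul_index inf_le_left
    have h3 : (F ⊓ M).relIndex M * M.index = (F ⊓ M).index :=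
      Subgroup.relIndex_mul_index inf_le_right
    rw [h1, hMi] at h3
    have hFi : F.index ≠ 0 := Subgroup.index_ne_zero_of_finite
    have h4 : (F ⊓ M).relIndex F * F.index = p * F.index := by
      rw [h2, ← h3]; ring
    exact Nat.eq_of_mul_eq_mul_right (Nat.pos_of_ne_zero hFi) h4
  -- D is normal in G
  have hDhat : ((F ⊓ M).subgroupOf F).index = p := hrelD
  have hDnormF : ((F ⊓ M).subgroupOf F).Normal := by
    have hlt : (F ⊓ M).subgroupOf F < ⊤ := by
      rw [lt_top_iff_ne_top]
      intro h
      rw [h, Subgroup.index_top] at hDhat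
      exact hp.one_lt.ne' hDhat.symm
    have hcond := normalizerCondition_of_isNilpotent (G := F)
    have hlt2 := hcond _ hlt
    have hmul := Subgroup.relIndex_mul_index (Subgroup.le_normalizer (H := (F ⊓ M).subgroupOf F))
    rw [hDhat] at hmul
    have hdvd : (Subgroup.normalizer (((F ⊓ M).subgroupOf F : Subgroup F) : Set F)).index ∣ p := ⟨_, by rw [← hmul]; ring⟩
    rcases hp.eq_one_or_self_of_dvd _ hdvd with h1 | h1
    · exact Subgroup.normalizer_eq_top_iff.mp (Subgroup.index_eq_one.mp h1)
    · exfalso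
      rw [h1] at hmul
      have h2 : ((F ⊓ M).subgroupOf F).relIndex (Subgroup.normalizer (((F ⊓ M).subgroupOf F : Subgroup F) : Set F)) = 1 := by
        have h3 : ((F ⊓ M).subgroupOf F).relIndex (Subgroup.normalizer (((F ⊓ M).subgroupOf F : Subgroup F) : Set F)) * p
            = 1 * p := by rw [hmul, one_mul]
        exact Nat.eq_of_mul_eq_mul_right hp.pos h3
      exact hlt2.not_ge (Subgroup.relIndex_eq_one.mp h2)
  have hDn : (F ⊓ M).Normal := by
    have hFc : ∀ f ∈ F, ∀ h ∈ F ⊓ M, f * h * f⁻¹ ∈ F ⊓ M := by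
      intro f hf h hh
      have h2 := hDnormF.conj_mem ⟨h, hh.1⟩ (by rwa [Subgroup.mem_subgroupOf]) ⟨f, hf⟩
      rwa [Subgroup.mem_subgroupOf] at h2
    have hMc : ∀ m ∈ M, ∀ h ∈ F ⊓ M, m * h * m⁻¹ ∈ F ⊓ M := by
      intro m hm h hh
      refine Subgroup.mem_inf.mpr ⟨hFn.conj_mem _ hh.1 m, ?_⟩
      exact M.mul_mem (M.mul_mem hm hh.2) (M.inv_mem hm)
    have hnt : Subgroup.normalizer ((F ⊓ M : Subgroup G) : Set G) = ⊤ := by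
      rw [eq_top_iff, ← htop]
      exact sup_le (SupersolvableAux.le_normalizer_of_conj hFc)
        (SupersolvableAux.le_normalizer_of_conj hMc)
    exact Subgroup.normalizer_eq_top_iff.mp hnt
  -- partial series up to D
  have hD : SupersolvableAux.SSTo (F ⊓ M) :=
    SupersolvableAux.ssto_chain F M hFn hFnil htop hM _ hDn inf_le_left inf_le_right
  -- F = D ⊔ ⟨y⟩
  obtain ⟨y, hyF, hyM⟩ := SetLike.not_le_iff_exists.mp hFM
  have hJle : (F ⊓ M) ⊔ Subgroup.zpowers y ≤ F :=
    sup_le inf_le_left (Subgroup.zpowers_le.mpr hyF)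
  have hFeq : F = (F ⊓ M) ⊔ Subgroup.zpowers y := by
    have hmul := Subgroup.relIndex_mul_relIndex (F ⊓ M) ((F ⊓ M) ⊔ Subgroup.zpowers y) F
      le_sup_left hJle
    rw [hrelD] at hmul
    have hne1 : (F ⊓ M).relIndex ((F ⊓ M) ⊔ Subgroup.zpowers y) ≠ 1 := by
      intro h
      have h2 := Subgroup.relIndex_eq_one.mp h
      exact hyM (h2 (Subgroup.mem_sup_right (Subgroup.mem_zpowers y))).2
    have hdvd : (F ⊓ M).relIndex ((F ⊓ M) ⊔ Subgroup.zpowers y) ∣ p := ⟨_, hmul.symm⟩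
    rcases hp.eq_one_or_self_of_dvd _ hdvd with h1 | h1
    · exact absurd h1 hne1
    · rw [h1] at hmul
      have h2 : ((F ⊓ M) ⊔ Subgroup.zpowers y).relIndex F = 1 := by
        have h3 : p * (((F ⊓ M) ⊔ Subgroup.zpowers y).relIndex F) = p * 1 := by
          rw [hmul, mul_one]
        exact Nat.eq_of_mul_eq_mul_left hp.pos h3
      exact (le_antisymm hJle (Subgroup.relIndex_eq_one.mp h2)).symm
  have hSSF : SupersolvableAux.SSTo F := SupersolvableAux.ssto_append hD hFn y hFeq
  -- series above F
  obtain ⟨n, t, ht0, htl, htle, htinv, hts⟩ := SupersolvableAux.exists_series M hM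
  have hEnorm : ∀ i, (F ⊔ t i).Normal := by
    intro i
    have hdecomp : ∀ h ∈ F ⊔ t i, ∃ c ∈ F, ∃ u ∈ t i, c * u = h := by
      intro h hh
      have h2 : h ∈ ((F : Set G) * ((t i : Subgroup G) : Set G)) := by
        rw [← Subgroup.normal_mul]; exact hh
      obtain ⟨c, hc, u, hu, rfl⟩ := h2
      exact ⟨c, hc, u, hu, rfl⟩
    have hFc : ∀ f ∈ F, ∀ h ∈ F ⊔ t i, f * h * f⁻¹ ∈ F ⊔ t i := by
      intro f hf h hh
      obtain ⟨c, hc, u, hu, rfl⟩ := hdecomp _ hh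
      have he : f * (c * u) * f⁻¹ = (f * c * f⁻¹) * ((f * (u * f⁻¹ * u⁻¹)) * u) := by group
      rw [he]
      refine mul_mem (Subgroup.mem_sup_left (hFn.conj_mem _ hc f))
        (mul_mem (Subgroup.mem_sup_left ?_) (Subgroup.mem_sup_right hu))
      exact mul_mem hf (hFn.conj_mem _ (inv_mem hf) u)
    have hMc : ∀ m ∈ M, ∀ h ∈ F ⊔ t i, m * h * m⁻¹ ∈ F ⊔ t i := by
      intro m hm h hh
      obtain ⟨c, hc, u, hu, rfl⟩ := hdecomp _ hh
      have he : m * (c * u) * m⁻¹ = (m * c * m⁻¹) * (m * u * m⁻¹) := by group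
      rw [he]
      exact mul_mem (Subgroup.mem_sup_left (hFn.conj_mem _ hc m))
        (Subgroup.mem_sup_right (htinv i m hm u hu))
    have hnt : Subgroup.normalizer ((F ⊔ t i : Subgroup G) : Set G) = ⊤ := by
      rw [eq_top_iff, ← htop]
      exact sup_le (SupersolvableAux.le_normalizer_of_conj hFc)
        (SupersolvableAux.le_normalizer_of_conj hMc)
    exact Subgroup.normalizer_eq_top_iff.mp hnt
  have hchain : ∀ j : ℕ, ∀ hj : j < n + 1, SupersolvableAux.SSTo (F ⊔ t ⟨j, hj⟩) := by
    intro j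
    induction j with
    | zero =>
      intro hj
      rw [Fin.mk_zero, ht0, sup_bot_eq]
      exact hSSF
    | succ j ih =>
      intro hj
      have hjn : j < n := by omega
      obtain ⟨x, hxM, hx⟩ := hts ⟨j, hjn⟩
      refine SupersolvableAux.ssto_append (ih (by omega)) (hEnorm _) x ?_
      have h1 : (⟨j + 1, hj⟩ : Fin (n + 1)) = (⟨j, hjn⟩ : Fin n).succ := rfl
      have h2 : (⟨j, by omega⟩ : Fin (n + 1)) = (⟨j, hjn⟩ : Fin n).castSucc := rfl
      rw [h1, hx, ← sup_assoc, ← h2]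
  have hfin := hchain n (by omega)
  rw [show (⟨n, by omega⟩ : Fin (n + 1)) = Fin.last n from rfl, htl, htop] at hfin
  exact hfin
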